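/- Let p be an odd prime, let n ≥ 1, and let k be a unit modulo pⁿ of multiplicative order p^{n−1}(p−1). Then wt(pⁿ, k; p^{n−1}(p−1)) ≤ (p+3)/4 + (n−1)p if p ≡ 1 (mod 4), and wt(pⁿ, k; p^{n−1}(p−1)) ≤ (p+5)/4 + (n−1)p if p ≡ 3 (mod 4). -/

import Mathlib

/-- The set `Ω(i, λ) = { b₁k^{i₁} + ⋯ + b_r k^{i_r} mod n : |b_j| ≤ λ_j }` in `ℤ/nℤ`. -/
def OmegaSet (n : ℕ) (k : (ZMod n)ˣ) {r : ℕ} (i : Fin r → ℕ) (lam : Fin r → ℕ) :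
    Set (ZMod n) :=
  { x | ∃ b : Fin r → ℤ, (∀ j, |b j| ≤ (lam j : ℤ)) ∧
      x = ∑ j, (b j : ZMod n) * ((k ^ i j : (ZMod n)ˣ) : ZMod n) }

/-- A `sequence`: a strictly decreasing tuple `α−1 ≥ i₁ > i₂ > ⋯ > i_r ≥ 0`. -/
def IsSeq (α : ℕ) {r : ℕ} (i : Fin r → ℕ) : Prop :=
  (∀ j, i j ≤ α - 1) ∧ StrictAnti i

/-- `wt(n, k; i)`: the minimal total weight `λ₁ + ⋯ + λ_r` over tuples `λ`
with `Ω(i,λ) = ℤ/nℤ`. -/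
noncomputable def wtSeq (n : ℕ) (k : (ZMod n)ˣ) {r : ℕ} (i : Fin r → ℕ) : ℕ :=
  sInf { s | ∃ lam : Fin r → ℕ, OmegaSet n k i lam = Set.univ ∧ ∑ j, lam j = s }

/-- The maximal sequence `Δ : α−1 > α−2 > ⋯ > 1 > 0`. -/
def DeltaSeq (α : ℕ) : Fin α → ℕ := fun j => α - 1 - (j : ℕ)

/-- `wt(n, k; α) := wt(n, k; Δ)`. -/
noncomputable def wtAlpha (n : ℕ) (k : (ZMod n)ˣ) (α : ℕ) : ℕ :=
  wtSeq n k (DeltaSeq α)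

open Finset

section Aux

/-- Balanced representative modulo an odd number. -/
lemma exists_bal (p : ℕ) (hodd : Odd p) (X : ℤ) :
    ∃ r : ℤ, |r| ≤ (((p - 1) / 2 : ℕ) : ℤ) ∧ (p : ℤ) ∣ X - r := by
  obtain ⟨q, hq⟩ := hodd
  subst hq
  have hp0 : (0:ℤ) < ((2*q+1 : ℕ) : ℤ) := by positivity
  set P : ℤ := ((2*q+1 : ℕ) : ℤ)
  have h0 : 0 ≤ X % P := Int.emod_nonneg X (by omega)
  have h1 : X % P < P := Int.emod_lt_of_pos X hp0
  have hdvd : P ∣ X - X % P := Int.dvd_self_sub_of_emod_eq rfl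
  have hq' : (((2*q+1 - 1) / 2 : ℕ) : ℤ) = (q : ℤ) := by norm_num
  by_cases hle : X % P ≤ (q : ℤ)
  · exact ⟨X % P, by rw [hq', abs_le]; omega, hdvd⟩
  · refine ⟨X % P - P, by rw [hq', abs_le]; push_cast [P] at h1 hle ⊢; omega, ?_⟩
    have h2 : X - (X % P - P) = X - X % P + P := by ring
    rw [h2]
    exact dvd_add hdvd dvd_rfl

/-- Balanced base-`p` digits. -/
lemma balanced_digits (p : ℕ) (hodd : Odd p) :
    ∀ (r : ℕ) (Y : ℤ), ∃ c : Fin r → ℤ, (∀ j, |c j| ≤ (((p - 1) / 2 : ℕ) : ℤ)) ∧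
      (p : ℤ) ^ r ∣ (∑ j, c j * (p : ℤ) ^ (j : ℕ)) - Y := by
  intro r
  induction r with
  | zero => exact fun Y => ⟨fun j => j.elim0, fun j => j.elim0, by simp⟩
  | succ r ih =>
    intro Y
    obtain ⟨c0, hc0, hd⟩ := exists_bal p hodd Y
    obtain ⟨Y', hY'⟩ := hd
    obtain ⟨c, hc, hd'⟩ := ih Y'
    refine ⟨Fin.cons c0 c, ?_, ?_⟩
    · intro j
      induction j using Fin.cases with
      | zero => simpa using hc0
      | succ j => simpa using hc j
    · rw [Fin.sum_univ_succ]
      have hsum : ∀ j : Fin r, (Fin.cons c0 c : Fin (r+1) → ℤ) j.succ * (p:ℤ) ^ ((j.succ : Fin (r+1)) : ℕ)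
          = (p:ℤ) * (c j * (p:ℤ) ^ (j:ℕ)) := by
        intro j
        rw [Fin.cons_succ]
        have h3 : ((j.succ : Fin (r+1)) : ℕ) = (j:ℕ) + 1 := rfl
        rw [h3, pow_succ]
        ring
      rw [Finset.sum_congr rfl fun j _ => hsum j, ← Finset.mul_sum]
      have key : (Fin.cons c0 c : Fin (r+1) → ℤ) 0 * (p:ℤ) ^ ((0 : Fin (r+1)) : ℕ)
          + (p:ℤ) * ∑ j : Fin r, c j * (p:ℤ)^(j:ℕ) - Y
          = (p:ℤ) * ((∑ j : Fin r, c j * (p:ℤ)^(j:ℕ)) - Y') := by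
        simp only [Fin.cons_zero]
        have h0 : ((0 : Fin (r+1)) : ℕ) = 0 := rfl
        rw [h0, pow_zero]
        have h4 : Y = c0 + (p:ℤ) * Y' := by omega
        rw [h4]; ring
      rw [key, pow_succ']
      exact mul_dvd_mul_left _ hd'

/-- If a family of units, each a power of `k` with exponent below `α`, together with
weights `w` covers all of `ZMod N`, then `wtAlpha N k α ≤ ∑ w`. -/
lemma wtAlpha_le_of_cover (N : ℕ) (k : (ZMod N)ˣ) (α : ℕ)
    {s : ℕ} (U : Fin s → (ZMod N)ˣ) (w : Fin s → ℕ)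
    (hU : ∀ l, ∃ e, e < α ∧ k ^ e = U l)
    (hcov : ∀ x : ZMod N, ∃ c : Fin s → ℤ, (∀ l, |c l| ≤ (w l : ℤ)) ∧
      x = ∑ l, (c l : ZMod N) * (U l : ZMod N)) :
    wtAlpha N k α ≤ ∑ l, w l := by
  classical
  choose e he hke using hU
  have hd : ∀ l, α - 1 - e l < α := fun l => by have := he l; omega
  set d : Fin s → Fin α := fun l => ⟨α - 1 - e l, hd l⟩ with hdd
  have hΔ : ∀ l, DeltaSeq α (d l) = e l := by
    intro l
    have := he l
    simp only [DeltaSeq, hdd]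
    omega
  set lam : Fin α → ℕ := fun pos => ∑ l ∈ univ.filter (fun l => d l = pos), w l with hlam
  have hΩ : OmegaSet N k (DeltaSeq α) lam = Set.univ := by
    ext x
    simp only [Set.mem_univ, iff_true]
    obtain ⟨c, hc, hx⟩ := hcov x
    refine ⟨fun pos => ∑ l ∈ univ.filter (fun l => d l = pos), c l, ?_, ?_⟩
    · intro pos
      calc |∑ l ∈ univ.filter (fun l => d l = pos), c l|
          ≤ ∑ l ∈ univ.filter (fun l => d l = pos), |c l| := Finset.abs_sum_le_sum_abs _ _
        _ ≤ ∑ l ∈ univ.filter (fun l => d l = pos), (w l : ℤ) :=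
            Finset.sum_le_sum fun l _ => hc l
        _ = (lam pos : ℤ) := by rw [hlam]; push_cast; ring
    · rw [hx, ← Finset.sum_fiberwise univ d (fun l => (c l : ZMod N) * (U l : ZMod N))]
      refine Finset.sum_congr rfl fun pos _ => ?_
      push_cast
      rw [Finset.sum_mul]
      refine Finset.sum_congr rfl fun l hl => ?_
      rw [Finset.mem_filter] at hl
      rw [← hl.2, hΔ l, ← hke l, Units.val_pow_eq_pow_val]
  exact Nat.sInf_le ⟨lam, hΩ, (Finset.sum_fiberwise univ d w).symm ▸ rfl⟩

lemma exists_pow_eq (N : ℕ) [NeZero N] (k : (ZMod N)ˣ) (α : ℕ) (hα : 0 < α)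
    (hord : orderOf k = α) (hcard : Fintype.card (ZMod N)ˣ = α) (u : (ZMod N)ˣ) :
    ∃ e, e < α ∧ k ^ e = u := by
  have htop : Subgroup.zpowers k = ⊤ := by
    apply Subgroup.eq_top_of_card_eq
    rw [Nat.card_eq_fintype_card, Fintype.card_zpowers, hord, Nat.card_eq_fintype_card, hcard]
  have hu : u ∈ Subgroup.zpowers k := htop ▸ Subgroup.mem_top u
  obtain ⟨z, hz⟩ := Subgroup.mem_zpowers_iff.mp hu
  have h1 : 0 ≤ z % (α : ℤ) := Int.emod_nonneg z (by exact_mod_cast hα.ne')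
  have h2 : z % (α : ℤ) < α := Int.emod_lt_of_pos z (by exact_mod_cast hα)
  refine ⟨(z % (α : ℤ)).toNat, by omega, ?_⟩
  have h3 : k ^ ((z % (α : ℤ)).toNat : ℤ) = k ^ z := by
    rw [Int.toNat_of_nonneg h1, ← hord]
    exact zpow_mod_orderOf k z
  rw [← zpow_natCast, h3, hz]

lemma step1 (p m : ℕ) (hodd : Odd p) (hm : (p - 1) / 2 ≤ 3 * m + 1) (X : ℤ) :
    ∃ a ε : ℤ, |a| ≤ (m : ℤ) ∧ |ε| ≤ 1 ∧ (p : ℤ) ∣ a + ε * ((2 * m + 1 : ℕ) : ℤ) - X := by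
  obtain ⟨r, hr, hdvd⟩ := exists_bal p hodd X
  have hm' : (((p - 1) / 2 : ℕ) : ℤ) ≤ 3 * (m : ℤ) + 1 := by exact_mod_cast hm
  rw [abs_le] at hr
  have hdvd' : (p : ℤ) ∣ r - X := by
    have := dvd_neg.mpr hdvd
    rwa [neg_sub] at this
  rcases le_or_gt r (m : ℤ) with h1 | h1
  · rcases le_or_gt (-(m : ℤ)) r with h2 | h2
    · exact ⟨r, 0, abs_le.mpr ⟨h2, h1⟩, by simp, by simpa using hdvd'⟩
    · -- r < -m : shift up
      refine ⟨r + ((2 * m + 1 : ℕ) : ℤ), -1, abs_le.mpr ?_, by simp, ?_⟩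
      · push_cast; push_cast at hr hm'; omega
      · have : r + ((2 * m + 1 : ℕ) : ℤ) + -1 * ((2 * m + 1 : ℕ) : ℤ) - X = r - X := by ring
        rw [this]; exact hdvd'
  · refine ⟨r - ((2 * m + 1 : ℕ) : ℤ), 1, abs_le.mpr ?_, by simp, ?_⟩
    · push_cast; push_cast at hr hm'; omega
    · have : r - ((2 * m + 1 : ℕ) : ℤ) + 1 * ((2 * m + 1 : ℕ) : ℤ) - X = r - X := by ring
      rw [this]; exact hdvd'

lemma main_aux (p : ℕ) (hp : p.Prime) (hodd : Odd p) (n₀ : ℕ)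
    (k : (ZMod (p ^ (n₀ + 1)))ˣ)
    (hk : orderOf k = p ^ n₀ * (p - 1))
    (m t : ℕ) (T : (ZMod (p ^ (n₀ + 1)))ˣ)
    (hT : (T : ZMod (p ^ (n₀ + 1))) = (t : ZMod (p ^ (n₀ + 1))))
    (hstep : ∀ X : ℤ, ∃ a ε : ℤ, |a| ≤ (m : ℤ) ∧ |ε| ≤ 1 ∧ (p : ℤ) ∣ a + ε * (t : ℤ) - X) :
    wtAlpha (p ^ (n₀ + 1)) k (p ^ n₀ * (p - 1)) ≤ m + 1 + n₀ * (p - 1) := by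
  classical
  have hp3 : 3 ≤ p := by
    rcases hodd with ⟨u, hu⟩
    have := hp.two_le
    omega
  haveI : NeZero (p ^ (n₀ + 1)) := ⟨pow_ne_zero _ (by omega)⟩
  have hαpos : 0 < p ^ n₀ * (p - 1) :=
    Nat.mul_pos (pow_pos (by omega) n₀) (by omega)
  have hcard : Fintype.card (ZMod (p ^ (n₀ + 1)))ˣ = p ^ n₀ * (p - 1) := by
    rw [ZMod.card_units_eq_totient, Nat.totient_prime_pow hp (by omega)]
    simp
  set q := (p - 1) / 2 with hq
  have h2q : 2 * q = p - 1 := by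
    rcases hodd with ⟨u, hu⟩; omega
  have hcop : ∀ j : ℕ, Nat.Coprime (p ^ (j + 1) + 1) (p ^ (n₀ + 1)) := by
    intro j
    refine Nat.Coprime.pow_right _ ?_
    have hnd : ¬ p ∣ p ^ (j + 1) + 1 := by
      intro h
      have h1 : p ∣ p ^ (j + 1) := dvd_pow_self p (Nat.succ_ne_zero j)
      have h2 := (Nat.dvd_add_right h1).mp h
      have := Nat.le_of_dvd one_pos h2
      omega
    exact (hp.coprime_iff_not_dvd.mpr hnd).symm
  have hUpow : ∀ l : Fin (n₀ + 2),
      ∃ e, e < p ^ n₀ * (p - 1) ∧ k ^ e =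
        (Fin.cons 1 (Fin.cons T (fun j : Fin n₀ => ZMod.unitOfCoprime _ (hcop (j : ℕ)))) :
          Fin (n₀ + 2) → (ZMod (p ^ (n₀ + 1)))ˣ) l :=
    fun l => exists_pow_eq _ k _ hαpos hk hcard _
  have hcov : ∀ x : ZMod (p ^ (n₀ + 1)), ∃ c : Fin (n₀ + 2) → ℤ,
      (∀ l, |c l| ≤ (((Fin.cons (m + n₀ * q) (Fin.cons 1 (fun _ : Fin n₀ => q)) :
          Fin (n₀ + 2) → ℕ)) l : ℤ)) ∧
      x = ∑ l, (c l : ZMod (p ^ (n₀ + 1))) *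
        ((Fin.cons 1 (Fin.cons T (fun j : Fin n₀ => ZMod.unitOfCoprime _ (hcop (j : ℕ)))) :
          Fin (n₀ + 2) → (ZMod (p ^ (n₀ + 1)))ˣ) l : ZMod (p ^ (n₀ + 1))) := by
    intro x
    obtain ⟨a, ε, ha, hε, hdvd⟩ := hstep (x.val : ℤ)
    obtain ⟨Y, hY⟩ := hdvd
    obtain ⟨c, hc, hdig⟩ := balanced_digits p hodd n₀ (-Y)
    obtain ⟨W, hW⟩ := hdig
    set S : ℤ := ∑ j : Fin n₀, c j with hS
    have h6 : ∑ j : Fin n₀, c j * ((p : ℤ) ^ ((j : ℕ) + 1) + 1)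
        = (p : ℤ) * (∑ j : Fin n₀, c j * (p : ℤ) ^ (j : ℕ)) + S := by
      rw [Finset.mul_sum, hS, ← Finset.sum_add_distrib]
      refine Finset.sum_congr rfl fun j _ => ?_
      rw [pow_succ]
      ring
    have e1 : ((a - S) + ε * t + ∑ j : Fin n₀, c j * ((p : ℤ) ^ ((j : ℕ) + 1) + 1))
        - (x.val : ℤ) = (p : ℤ) ^ (n₀ + 1) * W := by
      linear_combination hY + h6 + (p : ℤ) * hW
    have key : (((a - S) + ε * t + ∑ j : Fin n₀, c j * ((p : ℤ) ^ ((j : ℕ) + 1) + 1) : ℤ) :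
        ZMod (p ^ (n₀ + 1))) = x := by
      have e2 := congrArg (fun z : ℤ => (z : ZMod (p ^ (n₀ + 1)))) e1
      simp only [Int.cast_sub, Int.cast_mul, Int.cast_pow, Int.cast_natCast] at e2
      have hp0 : ((p : ZMod (p ^ (n₀ + 1)))) ^ (n₀ + 1) = 0 := by
        have h7 := ZMod.natCast_self (p ^ (n₀ + 1))
        push_cast at h7
        exact h7
      rw [hp0, zero_mul, sub_eq_zero] at e2
      rw [e2, ZMod.natCast_val, ZMod.cast_id]
    refine ⟨Fin.cons (a - S) (Fin.cons ε c), ?_, ?_⟩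
    · intro l
      induction l using Fin.cases with
      | zero =>
        simp only [Fin.cons_zero]
        calc |a - S| ≤ |a| + |S| := abs_sub a S
          _ ≤ (m : ℤ) + ∑ j : Fin n₀, |c j| := by
              refine add_le_add ha ?_
              exact (Finset.abs_sum_le_sum_abs _ _)
          _ ≤ (m : ℤ) + ∑ _j : Fin n₀, (q : ℤ) := by
              gcongr with j
              exact hc j
          _ ≤ ((m + n₀ * q : ℕ) : ℤ) := by
              push_cast
              simp [Finset.sum_const]
      | succ l =>
        induction l using Fin.cases with
        | zero => simpa using hε
        | succ l => simp only [Fin.cons_succ]; exact hc l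
    · rw [Fin.sum_univ_succ, Fin.sum_univ_succ]
      simp only [Fin.cons_zero, Fin.cons_succ, Units.val_one, hT, ZMod.coe_unitOfCoprime]
      rw [← key]
      push_cast
      ring
  calc wtAlpha (p ^ (n₀ + 1)) k (p ^ n₀ * (p - 1))
      ≤ ∑ l, (Fin.cons (m + n₀ * q) (Fin.cons 1 (fun _ : Fin n₀ => q)) :
          Fin (n₀ + 2) → ℕ) l :=
        wtAlpha_le_of_cover _ k _ _ _ hUpow hcov
    _ = m + 1 + n₀ * (p - 1) := by
        rw [Fin.sum_cons, Fin.sum_cons, ← h2q]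
        simp [Finset.sum_const, Nat.mul_comm]
        ring

end Aux

/-- For an odd prime `p`, `n ≥ 1`, and a unit `k` mod `pⁿ` of maximal order
`p^{n−1}(p−1)`, the weight `wt(pⁿ, k; p^{n−1}(p−1))` is at most
`(p+3)/4 + (n−1)p` if `p ≡ 1 (mod 4)`, and at most `(p+5)/4 + (n−1)p` if
`p ≡ 3 (mod 4)`. -/
theorem wt_prime_power_upper_bound (p : ℕ) (hp : p.Prime) (hodd : Odd p)
    (n : ℕ) (hn : 1 ≤ n) (k : (ZMod (p ^ n))ˣ)
    (hk : orderOf k = p ^ (n - 1) * (p - 1)) :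
    (p % 4 = 1 →
      wtAlpha (p ^ n) k (p ^ (n - 1) * (p - 1)) ≤ (p + 3) / 4 + (n - 1) * p) ∧
    (p % 4 = 3 →
      wtAlpha (p ^ n) k (p ^ (n - 1) * (p - 1)) ≤ (p + 5) / 4 + (n - 1) * p) := by
  obtain ⟨n₀, rfl⟩ : ∃ n₀, n = n₀ + 1 := ⟨n - 1, by omega⟩
  simp only [Nat.add_sub_cancel] at hk ⊢
  have hp3 : 3 ≤ p := by
    rcases hodd with ⟨u, hu⟩
    have := hp.two_le
    omega
  constructor
  · intro h4
    have hp5 : 5 ≤ p := by omega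
    set m := (p - 1) / 4 with hm
    have hnd : ¬ p ∣ 2 * m + 1 := by
      intro hdvd
      have := Nat.le_of_dvd (by omega) hdvd
      omega
    have hco : Nat.Coprime (2 * m + 1) (p ^ (n₀ + 1)) :=
      Nat.Coprime.pow_right _ ((hp.coprime_iff_not_dvd.mpr hnd).symm)
    have hb := main_aux p hp hodd n₀ k hk m (2 * m + 1) (ZMod.unitOfCoprime _ hco)
      (ZMod.coe_unitOfCoprime _ hco)
      (step1 p m hodd (by omega))
    refine le_trans hb ?_
    have h5 : n₀ * (p - 1) ≤ n₀ * p := Nat.mul_le_mul_left _ (by omega)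
    omega
  · intro h4
    rcases eq_or_ne p 3 with rfl | hne
    · -- p = 3 : use m = 1 and the trivial unit T = 1
      have hstep : ∀ X : ℤ, ∃ a ε : ℤ, |a| ≤ ((1 : ℕ) : ℤ) ∧ |ε| ≤ 1 ∧
          ((3 : ℕ) : ℤ) ∣ a + ε * ((1 : ℕ) : ℤ) - X := by
        intro X
        obtain ⟨r, hr, hdvd⟩ := exists_bal 3 ⟨1, rfl⟩ X
        refine ⟨r, 0, by simpa using hr, by simp, ?_⟩
        have h6 : r + 0 * ((1 : ℕ) : ℤ) - X = -(X - r) := by ring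
        rw [h6]
        exact dvd_neg.mpr hdvd
      have hb := main_aux 3 hp hodd n₀ k hk 1 1 1 (by simp) hstep
      refine le_trans hb ?_
      norm_num
      omega
    · have hp7 : 7 ≤ p := by
        have := hp.two_le
        rcases Nat.lt_or_ge p 7 with h | h
        · interval_cases p <;> simp_all <;> omega
        · exact h
      set m := (p + 1) / 4 with hm
      have hnd : ¬ p ∣ 2 * m + 1 := by
        intro hdvd
        have := Nat.le_of_dvd (by omega) hdvd
        omega
      have hco : Nat.Coprime (2 * m + 1) (p ^ (n₀ + 1)) :=
        Nat.Coprime.pow_right _ ((hp.coprime_iff_not_dvd.mpr hnd).symm)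
      have hb := main_aux p hp hodd n₀ k hk m (2 * m + 1) (ZMod.unitOfCoprime _ hco)
        (ZMod.coe_unitOfCoprime _ hco)
        (step1 p m hodd (by omega))
      refine le_trans hb ?_
      have h5 : n₀ * (p - 1) ≤ n₀ * p := Nat.mul_le_mul_left _ (by omega)
      omega
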